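/- arXiv:1204.1884 — 2 statements merged into one kernel-verified Lean document; each statement's English description precedes it below -/
import Mathlib

section
/- Let f : X → ℝ be bounded and measurable. If E[f | 𝒞_{<V}] = 0 μ-almost everywhere, then ‖f‖_{□^V} = 0. -/
open MeasureTheory

/-- The Gowers box integral `∫_{X⁺} ∏_{ω ∈ {0,1}^V} f(x^ω) dμ⁺`. -/
noncomputable def boxInt {V : Type} [Fintype V] [DecidableEq V]
    (X : V → Type) [∀ v, MeasurableSpace (X v)] (μ : ∀ v, Measure (X v))
    (f : (∀ v, X v) → ℝ) : ℝ :=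
  ∫ x : ∀ p : V × Bool, X p.1,
    ∏ ω : V → Bool, f (fun v => x (v, ω v))
    ∂(Measure.pi fun p : V × Bool => μ p.1)

/-- The Gowers box seminorm `‖f‖_{□^V} = (boxInt f)^{1/2^{|V|}}`. -/
noncomputable def boxNorm {V : Type} [Fintype V] [DecidableEq V]
    (X : V → Type) [∀ v, MeasurableSpace (X v)] (μ : ∀ v, Measure (X v))
    (f : (∀ v, X v) → ℝ) : ℝ :=
  (boxInt X μ f) ^ ((1 : ℝ) / 2 ^ Fintype.card V)

/-- The σ-algebra `𝒞_I` on `X = ∏_v X_v` of sets depending only on the coordinates in `I`. -/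
def cylAlg {V : Type} (X : V → Type) [∀ v, MeasurableSpace (X v)] (I : Set V) :
    MeasurableSpace (∀ v, X v) :=
  MeasurableSpace.comap (fun (x : ∀ v, X v) (i : ↥I) => x ↑i) MeasurableSpace.pi

/-- The σ-algebra `𝒞_{<V}` generated by `⋃_{I ⊊ V} 𝒞_I`. -/
def cylAlgLt {V : Type} (X : V → Type) [∀ v, MeasurableSpace (X v)] :
    MeasurableSpace (∀ v, X v) :=
  ⨆ (I : Set V) (_ : I ≠ Set.univ), cylAlg X I

section Aux

lemma integrable_of_abs_le' {α : Type} [MeasurableSpace α] {ν : Measure α} [IsFiniteMeasure ν]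
    {u : α → ℝ} (hu : Measurable u) {B : ℝ} (hB : ∀ a, |u a| ≤ B) : Integrable u ν :=
  Integrable.mono' (integrable_const B) hu.aestronglyMeasurable
    (Filter.Eventually.of_forall fun a => by simpa [Real.norm_eq_abs] using hB a)

lemma cylAlgLt_le {V : Type} (X : V → Type) [∀ v, MeasurableSpace (X v)] :
    cylAlgLt X ≤ MeasurableSpace.pi := by
  refine iSup₂_le fun I _ => ?_
  exact measurable_iff_comap_le.mp
    (measurable_pi_lambda _ fun i => measurable_pi_apply _)

lemma factor_meas {V : Type} [Fintype V] [DecidableEq V]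
    (X : V → Type) [∀ v, MeasurableSpace (X v)]
    {f : (∀ v, X v) → ℝ} (hfm : Measurable f)
    (ω : V → Bool) (hω : ω ≠ fun _ => false) (y : ∀ v, X v) :
    Measurable[cylAlgLt X] (fun x : ∀ v, X v => f (fun v => cond (ω v) (y v) (x v))) := by
  have hres : Measurable[cylAlg X {v | ω v = false}]
      (fun (x : ∀ v, X v) (i : ↥{v | ω v = false}) => x ↑i) :=
    measurable_iff_comap_le.mpr le_rfl
  have hglue : Measurable (fun (w : ∀ i : ↥{v | ω v = false}, X ↑i) (v : V) =>
      if h : ω v = false then w ⟨v, h⟩ else y v) := by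
    refine measurable_pi_lambda _ fun v => ?_
    by_cases h : ω v = false
    · simp only [dif_pos h]; exact measurable_pi_apply _
    · simp only [dif_neg h]; exact measurable_const
  have hcomp : Measurable[cylAlg X {v | ω v = false}]
      (fun x : ∀ v, X v => f (fun v => cond (ω v) (y v) (x v))) := by
    have h1 : (fun x : ∀ v, X v => f (fun v => cond (ω v) (y v) (x v)))
        = fun x => f (fun v => if _h : ω v = false then x v else y v) := by
      funext x; congr 1; funext v
      by_cases h : ω v = false
      · simp [h]
      · have h' : ω v = true := by simpa using h
        simp [h, h']
    rw [h1]
    exact (hfm.comp hglue).comp hres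
  have hIne : {v | ω v = false} ≠ Set.univ := by
    obtain ⟨v₀, hv₀⟩ := Function.ne_iff.mp hω
    refine (Set.ne_univ_iff_exists_notMem _).mpr ⟨v₀, ?_⟩
    simpa using hv₀
  exact hcomp.mono
    (le_iSup₂ (f := fun (I : Set V) (_ : I ≠ Set.univ) => cylAlg X I) _ hIne) le_rfl

end Aux

/-- If `E[f | 𝒞_{<V}] = 0` `μ`-a.e. then `‖f‖_{□^V} = 0`. -/
theorem boxNorm_eq_zero_of_condexp (V : Type) [Fintype V] [DecidableEq V] [Nonempty V]
    (X : V → Type) [∀ v, MeasurableSpace (X v)]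
    (μ : ∀ v, Measure (X v)) [∀ v, IsProbabilityMeasure (μ v)]
    (f : (∀ v, X v) → ℝ) (hfb : ∃ C, ∀ x, |f x| ≤ C) (hfm : Measurable f)
    (h : MeasureTheory.condExp (cylAlgLt X) (Measure.pi μ) f =ᵐ[Measure.pi μ] 0) :
    boxNorm X μ f = 0 := by
  obtain ⟨C, hC⟩ := hfb
  set C' : ℝ := max C 0 with hC'def
  have hC'0 : 0 ≤ C' := le_max_right _ _
  have hC' : ∀ x, |f x| ≤ C' := fun x => (hC x).trans (le_max_left _ _)
  set ν : Measure (∀ v, X v) := Measure.pi μ with hνdef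
  have hm : cylAlgLt X ≤ (MeasurableSpace.pi : MeasurableSpace (∀ v, X v)) := cylAlgLt_le X
  haveI : IsProbabilityMeasure ν := by rw [hνdef]; infer_instance
  -- the transfer map
  set Φ : ((∀ v, X v) × (∀ v, X v)) → (∀ p : V × Bool, X p.1) :=
    fun z p => cond p.2 (z.1 p.1) (z.2 p.1) with hΦdef
  have hΦ : Measurable Φ := by
    refine measurable_pi_lambda _ fun p => ?_
    rcases p with ⟨v, b⟩
    cases b
    · exact (measurable_pi_apply v).comp measurable_snd
    · exact (measurable_pi_apply v).comp measurable_fst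
  have hmap : (ν.prod ν).map Φ = Measure.pi (fun p : V × Bool => μ p.1) := by
    refine (Measure.pi_eq fun s hs => ?_).symm
    rw [Measure.map_apply hΦ (MeasurableSet.univ_pi hs)]
    have hpre : Φ ⁻¹' (Set.univ.pi s) =
        (Set.univ.pi fun v => s (v, true)) ×ˢ (Set.univ.pi fun v => s (v, false)) := by
      ext z
      simp only [hΦdef, Set.mem_preimage, Set.mem_pi, Set.mem_univ, forall_true_left,
        Set.mem_prod, Prod.forall]
      constructor
      · intro hz; exact ⟨fun v => hz v true, fun v => hz v false⟩
      · rintro ⟨h1, h2⟩ v b; cases b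
        · exact h2 v
        · exact h1 v
    rw [hpre, Measure.prod_prod, hνdef, Measure.pi_pi, Measure.pi_pi]
    rw [Fintype.prod_prod_type (f := fun p : V × Bool => μ p.1 (s p))]
    simp [Fintype.prod_bool, Finset.prod_mul_distrib]
  -- the big integrand on the product space
  set G : ((∀ v, X v) × (∀ v, X v)) → ℝ :=
    fun z => ∏ ω : V → Bool, f (fun v => cond (ω v) (z.1 v) (z.2 v)) with hGdef
  have hGmeas : Measurable G := by
    refine Finset.measurable_prod _ fun ω _ => ?_
    refine hfm.comp (measurable_pi_lambda _ fun v => ?_)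
    cases hv : ω v
    · simp only [cond_false]; exact (measurable_pi_apply v).comp measurable_snd
    · simp only [cond_true]; exact (measurable_pi_apply v).comp measurable_fst
  have habs : ∀ z, |G z| ≤ C' ^ Fintype.card (V → Bool) := by
    intro z
    rw [hGdef]
    calc |∏ ω : V → Bool, f (fun v => cond (ω v) (z.1 v) (z.2 v))|
        = ∏ ω : V → Bool, |f (fun v => cond (ω v) (z.1 v) (z.2 v))| := Finset.abs_prod _ _
      _ ≤ ∏ _ω : V → Bool, C' :=
          Finset.prod_le_prod (fun _ _ => abs_nonneg _) (fun ω _ => hC' _)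
      _ = C' ^ Fintype.card (V → Bool) := by
          rw [Finset.prod_const, Finset.card_univ]
  have hG_int : Integrable G (ν.prod ν) := integrable_of_abs_le' hGmeas habs
  -- the lower-order part of the product
  set g : (∀ v, X v) → (∀ v, X v) → ℝ := fun y x =>
    ∏ ω ∈ Finset.univ.erase (fun _ => false), f (fun v => cond (ω v) (y v) (x v)) with hgdef
  have hf_int : Integrable f ν := integrable_of_abs_le' hfm hC'
  have hinner : ∀ y : ∀ v, X v,
      (∫ x, ∏ ω : V → Bool, f (fun v => cond (ω v) (y v) (x v)) ∂ν) = 0 := by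
    intro y
    have hgm : Measurable[cylAlgLt X] (g y) := by
      refine Finset.measurable_prod _ fun ω hω => ?_
      exact factor_meas X hfm ω (Finset.mem_erase.mp hω).1 y
    have hgmeas : Measurable (g y) := hgm.mono hm le_rfl
    have hgabs : ∀ x, |g y x| ≤ C' ^ (Finset.univ.erase (fun _ : V => (false : Bool))).card := by
      intro x
      rw [hgdef]
      calc |∏ ω ∈ Finset.univ.erase (fun _ => false),
            f (fun v => cond (ω v) (y v) (x v))|
          = ∏ ω ∈ Finset.univ.erase (fun _ => false),
            |f (fun v => cond (ω v) (y v) (x v))| := Finset.abs_prod _ _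
        _ ≤ ∏ _ω ∈ Finset.univ.erase (fun _ : V => (false : Bool)), C' :=
            Finset.prod_le_prod (fun _ _ => abs_nonneg _) (fun ω _ => hC' _)
        _ = _ := Finset.prod_const _
    have hsplit : (fun x : ∀ v, X v => ∏ ω : V → Bool, f (fun v => cond (ω v) (y v) (x v)))
        = (g y) * f := by
      funext x
      rw [Pi.mul_apply, hgdef, mul_comm,
        ← Finset.mul_prod_erase Finset.univ _ (Finset.mem_univ (fun _ : V => (false : Bool)))]
      rfl
    rw [hsplit]
    have hgf_int : Integrable (g y * f) ν := by
      refine integrable_of_abs_le' (hgmeas.mul hfm)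
        (B := C' ^ (Finset.univ.erase (fun _ : V => (false : Bool))).card * C') fun x => ?_
      rw [Pi.mul_apply, abs_mul]
      exact mul_le_mul (hgabs x) (hC' x) (abs_nonneg _) (pow_nonneg hC'0 _)
    have h1 : ν[g y * f|cylAlgLt X] =ᵐ[ν] g y * ν[f|cylAlgLt X] :=
      condExp_mul_of_stronglyMeasurable_left hgm.stronglyMeasurable hgf_int hf_int
    have h2 : ν[g y * f|cylAlgLt X] =ᵐ[ν] 0 := by
      filter_upwards [h1, h] with x hx hx0
      rw [hx, Pi.mul_apply, hx0, Pi.zero_apply, mul_zero]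
    calc (∫ x, (g y * f) x ∂ν) = ∫ x, (ν[g y * f|cylAlgLt X]) x ∂ν := (integral_condExp hm).symm
      _ = ∫ _x, (0 : ℝ) ∂ν := integral_congr_ae h2
      _ = 0 := integral_zero _ _
  have hbox : boxInt X μ f = 0 := by
    rw [boxInt, ← hmap,
      integral_map hΦ.aemeasurable
        (Measurable.aestronglyMeasurable (by
          refine Finset.measurable_prod _ fun ω _ => ?_
          exact hfm.comp (measurable_pi_lambda _ fun v => measurable_pi_apply _)))]
    have hGeq : (fun z : ((∀ v, X v) × (∀ v, X v)) =>
        ∏ ω : V → Bool, f (fun v => (Φ z) (v, ω v))) = G := rfl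
    rw [hGeq, integral_prod _ hG_int]
    calc (∫ a, ∫ b, G (a, b) ∂ν ∂ν) = ∫ _a, (0 : ℝ) ∂ν :=
          integral_congr_ae (Filter.Eventually.of_forall fun a => hinner a)
      _ = 0 := integral_zero _ _
  rw [boxNorm, hbox]
  exact Real.zero_rpow (by positivity)
end

section
/- For every nonempty J ⊆ V and every bounded measurable f : X → ℝ, ∫_{X⁺_J} ∏_{ω∈{0,1}^J} f(x_{V∖J}, x_J^ω) dμ⁺_J ≥ 0. -/
open MeasureTheory
open scoped Classical

noncomputable section

/-- Recombine `(x_{V∖J}, x_J^ω)` into a point of `X = ∏_v X_v`. -/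
def recomb {V : Type} (X : V → Type) (J : Set V)
    (y : ∀ v : ↥(Jᶜ : Set V), X ↑v) (z : ∀ p : ↥J × Bool, X ↑p.1)
    (ω : ↥J → Bool) : ∀ v, X v := fun v =>
  if h : v ∈ J then z (⟨v, h⟩, ω ⟨v, h⟩) else y ⟨v, h⟩

namespace UJaux

variable {V : Type} [DecidableEq V] (X : V → Type) (J : Set V) (j0 : V) (hj0 : j0 ∈ J)

def ebE : Bool ≃ {q : ↥J × Bool // q.1 = (⟨j0, hj0⟩ : ↥J)} where
  toFun b := ⟨(⟨j0, hj0⟩, b), rfl⟩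
  invFun q := q.1.2
  left_inv _ := rfl
  right_inv q := Subtype.ext (Prod.ext q.2.symm rfl)

variable [∀ v, MeasurableSpace (X v)]

def Phi : (X j0 × X j0) ≃ᵐ (∀ q : {q : ↥J × Bool // q.1 = (⟨j0, hj0⟩ : ↥J)}, X ↑q.1.1) :=
  (MeasurableEquiv.finTwoArrow).symm.trans <|
    (MeasurableEquiv.piCongrLeft (π := fun _ : Bool => X j0) finTwoEquiv).trans <|
      MeasurableEquiv.piCongrLeft
        (π := fun q : {q : ↥J × Bool // q.1 = (⟨j0, hj0⟩ : ↥J)} => X ↑q.1.1) (ebE J j0 hj0)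

def Psiz : ((X j0 × X j0) ×
      (∀ q : {q : ↥J × Bool // ¬ q.1 = (⟨j0, hj0⟩ : ↥J)}, X ↑q.1.1)) ≃ᵐ
      (∀ q : ↥J × Bool, X ↑q.1) :=
  ((Phi X J j0 hj0).prodCongr (MeasurableEquiv.refl _)).trans
    (MeasurableEquiv.piEquivPiSubtypeProd (π := fun q : ↥J × Bool => X ↑q.1)
      (fun q => q.1 = (⟨j0, hj0⟩ : ↥J))).symm

def Zmap (a b : X j0)
    (w : ∀ q : {q : ↥J × Bool // ¬ q.1 = (⟨j0, hj0⟩ : ↥J)}, X ↑q.1.1) :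
    ∀ q : ↥J × Bool, X ↑q.1 := fun q =>
  if h : q.1 = (⟨j0, hj0⟩ : ↥J) then
    cast (congrArg (fun k : ↥J => X ↑k) h).symm (bif q.2 then b else a)
  else w ⟨q, h⟩

lemma Phi_eval (a b : X j0) (c : Bool)
    (hq : ((⟨j0, hj0⟩, c) : ↥J × Bool).1 = (⟨j0, hj0⟩ : ↥J)) :
    Phi X J j0 hj0 (a, b) ⟨(⟨j0, hj0⟩, c), hq⟩ = bif c then b else a := by
  show (Equiv.piCongrLeft (fun q : {q : ↥J × Bool // q.1 = (⟨j0, hj0⟩ : ↥J)} => X ↑q.1.1)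
      (ebE J j0 hj0))
      ((Equiv.piCongrLeft (fun _ : Bool => X j0) finTwoEquiv)
        ((MeasurableEquiv.finTwoArrow).symm (a, b))) (ebE J j0 hj0 c) = bif c then b else a
  refine (Equiv.piCongrLeft_apply_apply (e := ebE J j0 hj0) (P := fun q : {q : ↥J × Bool // q.1 = (⟨j0, hj0⟩ : ↥J)} => X ↑q.1.1) ((Equiv.piCongrLeft (fun _ : Bool => X j0) finTwoEquiv)
        ((MeasurableEquiv.finTwoArrow).symm (a, b))) c).trans ?_
  cases c
  · show (Equiv.piCongrLeft (fun _ : Bool => X j0) finTwoEquiv) _ (finTwoEquiv 0) = _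
    rw [Equiv.piCongrLeft_apply_apply]
    rfl
  · show (Equiv.piCongrLeft (fun _ : Bool => X j0) finTwoEquiv) _ (finTwoEquiv 1) = _
    rw [Equiv.piCongrLeft_apply_apply]
    rfl

lemma Zmap_pos (a b : X j0)
    (w : ∀ q : {q : ↥J × Bool // ¬ q.1 = (⟨j0, hj0⟩ : ↥J)}, X ↑q.1.1) (c : Bool) :
    Zmap X J j0 hj0 a b w (⟨j0, hj0⟩, c) = bif c then b else a := by
  exact (dif_pos rfl).trans (cast_eq _ _)

lemma Zmap_neg (a b : X j0)
    (w : ∀ q : {q : ↥J × Bool // ¬ q.1 = (⟨j0, hj0⟩ : ↥J)}, X ↑q.1.1)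
    (q : ↥J × Bool) (h : ¬ q.1 = (⟨j0, hj0⟩ : ↥J)) :
    Zmap X J j0 hj0 a b w q = w ⟨q, h⟩ := by
  exact dif_neg h

lemma Psiz_eval (a b : X j0)
    (w : ∀ q : {q : ↥J × Bool // ¬ q.1 = (⟨j0, hj0⟩ : ↥J)}, X ↑q.1.1) :
    Psiz X J j0 hj0 ((a, b), w) = Zmap X J j0 hj0 a b w := by
  funext q
  show (Equiv.piEquivPiSubtypeProd (fun q : ↥J × Bool => q.1 = (⟨j0, hj0⟩ : ↥J))
      (fun q : ↥J × Bool => X ↑q.1)).symm (Phi X J j0 hj0 (a, b), w) q = _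
  rw [Equiv.piEquivPiSubtypeProd_symm_apply]
  obtain ⟨k, c⟩ := q
  by_cases h : ((k, c) : ↥J × Bool).1 = (⟨j0, hj0⟩ : ↥J)
  · rw [dif_pos h]
    have h' : k = (⟨j0, hj0⟩ : ↥J) := h
    subst h'
    exact (Phi_eval X J j0 hj0 a b c h).trans (Zmap_pos X J j0 hj0 a b w c).symm
  · rw [dif_neg h]
    exact (Zmap_neg X J j0 hj0 a b w (k, c) h).symm

lemma splitAt_pos (c : Bool) (ω' : {k : ↥J // k ≠ (⟨j0, hj0⟩ : ↥J)} → Bool) :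
    (Equiv.funSplitAt (⟨j0, hj0⟩ : ↥J) Bool).symm (c, ω') (⟨j0, hj0⟩ : ↥J) = c := by
  show (if h : (⟨j0, hj0⟩ : ↥J) = (⟨j0, hj0⟩ : ↥J) then _ else _) = c
  rw [dif_pos rfl]

lemma splitAt_neg (c : Bool) (ω' : {k : ↥J // k ≠ (⟨j0, hj0⟩ : ↥J)} → Bool)
    (k : ↥J) (h : k ≠ (⟨j0, hj0⟩ : ↥J)) :
    (Equiv.funSplitAt (⟨j0, hj0⟩ : ↥J) Bool).symm (c, ω') k = ω' ⟨k, h⟩ := by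
  show (if h : k = (⟨j0, hj0⟩ : ↥J) then _ else _) = _
  rw [dif_neg h]

lemma recomb_Zmap (y : ∀ v : ↥(Jᶜ : Set V), X ↑v) (a b : X j0)
    (w : ∀ q : {q : ↥J × Bool // ¬ q.1 = (⟨j0, hj0⟩ : ↥J)}, X ↑q.1.1)
    (c : Bool) (ω' : {k : ↥J // k ≠ (⟨j0, hj0⟩ : ↥J)} → Bool) :
    recomb X J y (Zmap X J j0 hj0 a b w)
        ((Equiv.funSplitAt (⟨j0, hj0⟩ : ↥J) Bool).symm (c, ω'))
      = recomb X J y (Zmap X J j0 hj0 (bif c then b else a) (bif c then b else a) w)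
        ((Equiv.funSplitAt (⟨j0, hj0⟩ : ↥J) Bool).symm (false, ω')) := by
  funext v
  simp only [recomb]
  by_cases h : v ∈ J
  · rw [dif_pos h, dif_pos h]
    by_cases h2 : (⟨v, h⟩ : ↥J) = (⟨j0, hj0⟩ : ↥J)
    · have hv : v = j0 := congrArg Subtype.val h2
      subst hv
      rw [splitAt_pos, splitAt_pos, Zmap_pos, Zmap_pos]
      cases c <;> rfl
    · rw [splitAt_neg J j0 hj0 c ω' _ h2, splitAt_neg J j0 hj0 false ω' _ h2,
        Zmap_neg X J j0 hj0 a b w _ h2, Zmap_neg X J j0 hj0 _ _ w _ h2]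
  · rw [dif_neg h, dif_neg h]

end UJaux

/-- The integral `∫_{X⁺_J} ∏_{ω ∈ {0,1}^J} f(x_{V∖J}, x_J^ω) dμ⁺_J`. -/
def UJint {V : Type} [Fintype V] [DecidableEq V] (X : V → Type)
    [∀ v, MeasurableSpace (X v)] (μ : ∀ v, Measure (X v)) (J : Set V)
    (f : (∀ v, X v) → ℝ) : ℝ :=
  ∫ p : (∀ v : ↥(Jᶜ : Set V), X ↑v) × (∀ q : ↥J × Bool, X ↑q.1),
    ∏ ω : ↥J → Bool, f (recomb X J p.1 p.2 ω)
    ∂((Measure.pi fun v : ↥(Jᶜ : Set V) => μ ↑v).prod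
      (Measure.pi fun q : ↥J × Bool => μ ↑q.1))

/-- For nonempty `J ⊆ V` and bounded measurable `f`,
`∫_{X⁺_J} ∏_{ω ∈ {0,1}^J} f(x_{V∖J}, x_J^ω) dμ⁺_J ≥ 0`. -/
theorem UJint_nonneg (V : Type) [Fintype V] [DecidableEq V] [Nonempty V]
    (X : V → Type) [∀ v, MeasurableSpace (X v)]
    (μ : ∀ v, Measure (X v)) [∀ v, IsProbabilityMeasure (μ v)]
    (J : Set V) (hJ : J.Nonempty)
    (f : (∀ v, X v) → ℝ) (hfb : ∃ C, ∀ x, |f x| ≤ C) (hfm : Measurable f) :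
    0 ≤ UJint X μ J f := by
  obtain ⟨C₀, hC₀⟩ := hfb
  set C : ℝ := max C₀ 0 with hCdef
  have hfC : ∀ x, |f x| ≤ C := fun x => (hC₀ x).trans (le_max_left _ _)
  obtain ⟨j0, hj0⟩ := hJ
  set μY : Measure (∀ v : ↥(Jᶜ : Set V), X ↑v) := Measure.pi fun v : ↥(Jᶜ : Set V) => μ ↑v
    with hμY
  set μB : Measure (∀ q : {q : ↥J × Bool // ¬ q.1 = (⟨j0, hj0⟩ : ↥J)}, X ↑q.1.1) :=
    Measure.pi fun q : {q : ↥J × Bool // ¬ q.1 = (⟨j0, hj0⟩ : ↥J)} => μ ↑q.1.1 with hμB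
  have hPsiz : MeasurePreserving (UJaux.Psiz X J j0 hj0)
      (((μ j0).prod (μ j0)).prod μB) (Measure.pi fun q : ↥J × Bool => μ ↑q.1) := by
    have a1 := (measurePreserving_finTwoArrow (μ j0)).symm MeasurableEquiv.finTwoArrow
    have a2 := measurePreserving_piCongrLeft (fun _ : Bool => μ j0) finTwoEquiv
    have a3 := measurePreserving_piCongrLeft
      (fun q : {q : ↥J × Bool // q.1 = (⟨j0, hj0⟩ : ↥J)} => μ ↑q.1.1) (UJaux.ebE J j0 hj0)
    have h1 : MeasurePreserving (UJaux.Phi X J j0 hj0) ((μ j0).prod (μ j0))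
        (Measure.pi fun q : {q : ↥J × Bool // q.1 = (⟨j0, hj0⟩ : ↥J)} => μ ↑q.1.1) :=
      a3.comp (a2.comp a1)
    have h2 := (measurePreserving_piEquivPiSubtypeProd
      (fun q : ↥J × Bool => μ ↑q.1) (fun q : ↥J × Bool => q.1 = (⟨j0, hj0⟩ : ↥J))).symm
      (MeasurableEquiv.piEquivPiSubtypeProd (π := fun q : ↥J × Bool => X ↑q.1)
        (fun q : ↥J × Bool => q.1 = (⟨j0, hj0⟩ : ↥J)))
    have hcoe : ⇑(UJaux.Psiz X J j0 hj0)
        = ⇑(MeasurableEquiv.piEquivPiSubtypeProd (π := fun q : ↥J × Bool => X ↑q.1)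
            (fun q : ↥J × Bool => q.1 = (⟨j0, hj0⟩ : ↥J))).symm
          ∘ Prod.map (⇑(UJaux.Phi X J j0 hj0)) id := by
      funext s; rfl
    rw [hcoe]
    exact h2.comp (h1.prod (MeasurePreserving.id μB))
  set Ψ := (MeasurableEquiv.refl (∀ v : ↥(Jᶜ : Set V), X ↑v)).prodCongr
    (UJaux.Psiz X J j0 hj0) with hΨdef
  have hΨ : MeasurePreserving Ψ (μY.prod (((μ j0).prod (μ j0)).prod μB))
      (μY.prod (Measure.pi fun q : ↥J × Bool => μ ↑q.1)) := by
    have h := (MeasurePreserving.id μY).prod hPsiz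
    have hcoe : ⇑Ψ = Prod.map id ⇑(UJaux.Psiz X J j0 hj0) := by funext s; rfl
    rw [hcoe]
    exact h
  set H : ((∀ v : ↥(Jᶜ : Set V), X ↑v) ×
      ((X j0 × X j0) × (∀ q : {q : ↥J × Bool // ¬ q.1 = (⟨j0, hj0⟩ : ↥J)}, X ↑q.1.1))) → ℝ :=
    fun s => ∏ ω : ↥J → Bool, f (recomb X J s.1 (UJaux.Psiz X J j0 hj0 s.2) ω) with hHdef
  have hint : ∫ s, H s ∂(μY.prod (((μ j0).prod (μ j0)).prod μB)) = UJint X μ J f := by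
    unfold UJint
    exact hΨ.integral_comp Ψ.measurableEmbedding
      (fun p => ∏ ω : ↥J → Bool, f (recomb X J p.1 p.2 ω))
  rw [← hint]
  have hrec : ∀ ω : ↥J → Bool, Measurable fun s :
      ((∀ v : ↥(Jᶜ : Set V), X ↑v) ×
        ((X j0 × X j0) × (∀ q : {q : ↥J × Bool // ¬ q.1 = (⟨j0, hj0⟩ : ↥J)}, X ↑q.1.1))) =>
      recomb X J s.1 (UJaux.Psiz X J j0 hj0 s.2) ω := by
    intro ω
    apply measurable_pi_lambda
    intro v
    by_cases h : v ∈ J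
    · simp only [recomb, dif_pos h]
      exact (measurable_pi_apply _).comp
        ((UJaux.Psiz X J j0 hj0).measurable.comp measurable_snd)
    · simp only [recomb, dif_neg h]
      exact (measurable_pi_apply _).comp measurable_fst
  have hHm : Measurable H :=
    Finset.measurable_prod _ fun ω _ => hfm.comp (hrec ω)
  have hHb : ∀ s, ‖H s‖ ≤ C ^ Fintype.card (↥J → Bool) := by
    intro s
    rw [Real.norm_eq_abs, hHdef, Finset.abs_prod]
    calc (∏ ω : ↥J → Bool, |f (recomb X J s.1 (UJaux.Psiz X J j0 hj0 s.2) ω)|)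
        ≤ ∏ _ω : ↥J → Bool, C :=
          Finset.prod_le_prod (fun _ _ => abs_nonneg _) (fun ω _ => hfC _)
      _ = C ^ Fintype.card (↥J → Bool) := by rw [Finset.prod_const, Finset.card_univ]
  have hHint : Integrable H (μY.prod (((μ j0).prod (μ j0)).prod μB)) :=
    (integrable_const _).mono' hHm.aestronglyMeasurable (ae_of_all _ hHb)
  rw [integral_prod _ hHint]
  refine integral_nonneg fun y => ?_
  have hHy : Integrable (fun zz => H (y, zz)) (((μ j0).prod (μ j0)).prod μB) :=
    (integrable_const (C ^ Fintype.card (↥J → Bool))).mono'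
      ((hHm.comp measurable_prodMk_left).aestronglyMeasurable)
      (ae_of_all _ fun zz => hHb _)
  rw [integral_prod_symm _ hHy]
  refine integral_nonneg fun w => ?_
  set g : X j0 → ℝ := fun t =>
    ∏ ω' : {k : ↥J // k ≠ (⟨j0, hj0⟩ : ↥J)} → Bool,
      f (recomb X J y (UJaux.Zmap X J j0 hj0 t t w)
        ((Equiv.funSplitAt (⟨j0, hj0⟩ : ↥J) Bool).symm (false, ω'))) with hgdef
  have hprod : (fun ab : X j0 × X j0 => H (y, (ab, w))) = fun ab => g ab.1 * g ab.2 := by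
    funext ab
    obtain ⟨a, b⟩ := ab
    show (∏ ω : ↥J → Bool, f (recomb X J y (UJaux.Psiz X J j0 hj0 ((a, b), w)) ω)) = _
    rw [UJaux.Psiz_eval]
    have ht : ∀ c : Bool, (∏ ω' : {k : ↥J // k ≠ (⟨j0, hj0⟩ : ↥J)} → Bool,
        f (recomb X J y (UJaux.Zmap X J j0 hj0 a b w)
          ((Equiv.funSplitAt (⟨j0, hj0⟩ : ↥J) Bool).symm (c, ω'))))
        = g (bif c then b else a) := by
      intro c
      refine Finset.prod_congr rfl fun ω' _ => ?_
      rw [UJaux.recomb_Zmap]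
    calc (∏ ω : ↥J → Bool, f (recomb X J y (UJaux.Zmap X J j0 hj0 a b w) ω))
        = ∏ p : Bool × ({k : ↥J // k ≠ (⟨j0, hj0⟩ : ↥J)} → Bool),
            f (recomb X J y (UJaux.Zmap X J j0 hj0 a b w)
              ((Equiv.funSplitAt (⟨j0, hj0⟩ : ↥J) Bool).symm p)) := by
          refine Fintype.prod_equiv (Equiv.funSplitAt (⟨j0, hj0⟩ : ↥J) Bool) _ _ fun ω => ?_
          rw [Equiv.symm_apply_apply]
      _ = ∏ c : Bool, ∏ ω' : {k : ↥J // k ≠ (⟨j0, hj0⟩ : ↥J)} → Bool,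
            f (recomb X J y (UJaux.Zmap X J j0 hj0 a b w)
              ((Equiv.funSplitAt (⟨j0, hj0⟩ : ↥J) Bool).symm (c, ω'))) :=
          Fintype.prod_prod_type _
      _ = g b * g a := by rw [Fintype.prod_bool, ht true, ht false]; rfl

      _ = g a * g b := mul_comm _ _
  rw [hprod, integral_prod_mul]
  exact mul_self_nonneg _

end
end
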